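/- Let R be a ring and let M, N be R-modules. Then M ⊕ N is of type FP_n if and only if both M and N are of type FP_n. -/

import Mathlib

open CategoryTheory

/-- An `R`-module `M` is of type `FP_n` if it admits a projective resolution that is
finitely generated in degrees `≤ n`. -/
def IsTypeFP (R : Type) [Ring R] (M : ModuleCat R) (n : ℕ) : Prop :=
  ∃ res : ProjectiveResolution M, ∀ i ≤ n, Module.Finite R (res.complex.X i)

open LinearMap Function


section
variable {R : Type} [Ring R]

/-- Splitting lemma: if `π : A → B` has a linear section `s`, then `A ≃ ker π × B`. -/
noncomputable def splitEquiv {A B : Type} [AddCommGroup A] [AddCommGroup B]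
    [Module R A] [Module R B] (π : A →ₗ[R] B) (s : B →ₗ[R] A)
    (h : ∀ b, π (s b) = b) : (↥(ker π) × B) ≃ₗ[R] A := by
  refine LinearEquiv.ofLinear ((ker π).subtype.comp (fst R _ _) + s.comp (snd R _ _))
    (LinearMap.prod (codRestrict (ker π) (LinearMap.id - s.comp π) (by intro x; simp [h])) π)
    (LinearMap.ext fun x => ?_) (LinearMap.ext fun x => ?_)
  · simp
  · refine Prod.ext (Subtype.ext ?_) ?_ <;>
      simp [h, (x.1.2 : π ↑x.1 = 0)]
end

section
variable {R : Type} [Ring R]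
variable {X P Q : Type} [AddCommGroup X] [AddCommGroup P] [AddCommGroup Q]
  [Module R X] [Module R P] [Module R Q]

lemma schanuel_half (hQ : Module.Projective R Q)
    (f : P →ₗ[R] X) (g : Q →ₗ[R] X) (hf : Surjective f) :
    Nonempty ((↥(ker f) × Q) ≃ₗ[R]
      ↥(ker (f.comp (fst R P Q) - g.comp (snd R P Q)))) := by
  set D := f.comp (fst R P Q) - g.comp (snd R P Q) with hD
  set K := ker D with hK
  have memK : ∀ x : P × Q, x ∈ K ↔ f x.1 = g x.2 := by
    intro x
    simp [hK, hD, mem_ker, sub_eq_zero]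
  set φ : ↥K →ₗ[R] Q := (snd R P Q).comp K.subtype with hφ
  have hφs : Surjective φ := by
    intro q
    obtain ⟨p, hp⟩ := hf (g q)
    exact ⟨⟨(p, q), (memK _).2 hp⟩, rfl⟩
  obtain ⟨s, hs⟩ := Module.projective_lifting_property φ LinearMap.id hφs
  have hsec : ∀ b, φ (s b) = b := fun b => LinearMap.ext_iff.1 hs b
  have e1 : (↥(ker φ) × Q) ≃ₗ[R] ↥K := splitEquiv φ s hsec
  let j2 : ↥(ker f) →ₗ[R] ↥K :=
    codRestrict K ((inl R P Q).comp (ker f).subtype)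
      (fun x => (memK _).2 (by simp [mem_ker.1 x.2]))
  have e0 : ↥(ker f) ≃ₗ[R] ↥(ker φ) := by
    refine LinearEquiv.ofLinear
      (codRestrict (ker φ) j2 (fun x => by simp [mem_ker, hφ, j2]))
      (codRestrict (ker f) ((fst R P Q).comp (K.subtype.comp (ker φ).subtype))
        (fun x => ?_)) (LinearMap.ext fun x => ?_) (LinearMap.ext fun x => ?_)
    · have h1 : f (x.1 : P × Q).1 = g (x.1 : P × Q).2 := (memK _).1 x.1.2
      have h2 : ((x.1 : P × Q).2 : Q) = 0 := mem_ker.1 x.2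
      show f (x.1 : P × Q).1 = 0
      rw [h1, h2, map_zero]
    · have h2 : ((x.1 : P × Q).2 : Q) = 0 := mem_ker.1 x.2
      refine Subtype.ext (Subtype.ext (Prod.ext ?_ ?_))
      · simp [j2]
      · simp [j2, h2]
    · exact Subtype.ext (by simp [j2])
  exact ⟨(e0.prodCongr (LinearEquiv.refl R Q)).trans e1⟩

lemma schanuel (hP : Module.Projective R P) (hQ : Module.Projective R Q)
    (f : P →ₗ[R] X) (g : Q →ₗ[R] X) (hf : Surjective f) (hg : Surjective g) :
    Nonempty ((↥(ker f) × Q) ≃ₗ[R] ↥(ker g) × P) := by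
  obtain ⟨e1⟩ := schanuel_half hQ f g hf
  obtain ⟨e2⟩ := schanuel_half hP g f hg
  have esw : ↥(ker (g.comp (fst R Q P) - f.comp (snd R Q P))) ≃ₗ[R]
      ↥(ker (f.comp (fst R P Q) - g.comp (snd R P Q))) :=
    ((LinearEquiv.prodComm R Q P).submoduleMap _).trans
      (LinearEquiv.ofEq _ _ (by
        ext x
        simp only [Submodule.mem_map_equiv, mem_ker, LinearMap.sub_apply, LinearMap.comp_apply]
        rw [show ((LinearEquiv.prodComm R Q P).symm x) = (x.2, x.1) from rfl]
        rw [sub_eq_zero, sub_eq_zero]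
        exact eq_comm))
  exact ⟨e1.trans (esw.symm.trans e2.symm)⟩

end

section
variable (R : Type) [Ring R]

/-- `fgres R n M`: there is a partial free resolution of `M`, finitely generated
through `n` stages (with the `n`-th syzygy finitely generated). -/
def fgres : ℕ → ∀ (M : Type) [AddCommGroup M] [Module R M], Prop
  | 0, M, _, _ => Module.Finite R M
  | (n+1), M, _, _ => ∃ (k : ℕ) (f : (Fin k → R) →ₗ[R] M),
      Surjective f ∧ fgres n ↥(ker f)

variable {R}

/-- `p.prod q ≃ p × q`. -/
noncomputable def prodSubEquiv {A B : Type} [AddCommGroup A] [AddCommGroup B]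
    [Module R A] [Module R B] (p : Submodule R A) (q : Submodule R B) :
    ↥(p.prod q) ≃ₗ[R] ↥p × ↥q := by
  refine LinearEquiv.ofLinear
    (LinearMap.prod
      (codRestrict p ((fst R A B).comp (p.prod q).subtype) (fun x => x.2.1))
      (codRestrict q ((snd R A B).comp (p.prod q).subtype) (fun x => x.2.2)))
    (codRestrict (p.prod q)
      (LinearMap.prodMap p.subtype q.subtype) (fun x => ⟨x.1.2, x.2.2⟩))
    (LinearMap.ext fun x => ?_) (LinearMap.ext fun x => ?_)
  · exact Prod.ext (Subtype.ext rfl) (Subtype.ext rfl)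
  · exact Subtype.ext rfl

lemma fgres_congr {n : ℕ} {A B : Type} [AddCommGroup A] [AddCommGroup B]
    [Module R A] [Module R B] (h : fgres R n A) (e : A ≃ₗ[R] B) : fgres R n B := by
  induction n generalizing A B with
  | zero => haveI : Module.Finite R A := h; exact Module.Finite.equiv e
  | succ n ih =>
    obtain ⟨k, f, hf, hker⟩ := h
    refine ⟨k, e.toLinearMap.comp f, e.surjective.comp hf, ?_⟩
    have heq : ker (e.toLinearMap.comp f) = ker f := by
      rw [ker_comp, LinearEquiv.ker, Submodule.comap_bot]
    exact ih hker (LinearEquiv.ofEq _ _ heq.symm)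

lemma fgres_subsingleton {n : ℕ} {A : Type} [AddCommGroup A] [Module R A]
    [Subsingleton A] : fgres R n A := by
  induction n generalizing A with
  | zero =>
    exact Module.Finite.of_surjective (0 : (Fin 0 → R) →ₗ[R] A)
      (fun a => ⟨0, Subsingleton.elim _ _⟩)
  | succ n ih =>
    exact ⟨0, 0, fun a => ⟨0, Subsingleton.elim _ _⟩, ih⟩

lemma fgres_free {n k : ℕ} : fgres R n (Fin k → R) := by
  induction n with
  | zero => show Module.Finite R (Fin k → R); infer_instance
  | succ n ih =>
    refine ⟨k, LinearMap.id, surjective_id, ?_⟩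
    rw [ker_id]
    exact fgres_subsingleton

lemma fgres_prod {n : ℕ} {A B : Type} [AddCommGroup A] [AddCommGroup B]
    [Module R A] [Module R B] (hA : fgres R n A) (hB : fgres R n B) :
    fgres R n (A × B) := by
  induction n generalizing A B with
  | zero => haveI : Module.Finite R A := hA; haveI : Module.Finite R B := hB; show Module.Finite R (A × B); infer_instance
  | succ n ih =>
    obtain ⟨k, f, hf, hkf⟩ := hA
    obtain ⟨l, g, hg, hkg⟩ := hB
    have E : (Fin (k + l) → R) ≃ₗ[R] (Fin k → R) × (Fin l → R) :=
      (LinearEquiv.funCongrLeft R R finSumFinEquiv).trans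
        (LinearEquiv.sumArrowLequivProdArrow _ _ R R)
    have hsurj : Surjective ((LinearMap.prodMap f g).comp E.toLinearMap) := by
      refine Surjective.comp (g := LinearMap.prodMap f g) ?_ E.surjective
      intro x
      obtain ⟨a, ha⟩ := hf x.1
      obtain ⟨b, hb⟩ := hg x.2
      exact ⟨(a, b), Prod.ext ha hb⟩
    refine ⟨k + l, (LinearMap.prodMap f g).comp E.toLinearMap, hsurj, ?_⟩
    have hker : fgres R n ↥(ker (LinearMap.prodMap f g)) := by
      rw [ker_prodMap]
      exact fgres_congr (ih hkf hkg) (prodSubEquiv _ _).symm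
    have heq : ker ((LinearMap.prodMap f g).comp E.toLinearMap)
        = (ker (LinearMap.prodMap f g)).comap E.toLinearMap := ker_comp _ _
    exact fgres_congr hker ((E.ofSubmodule' _).symm.trans (LinearEquiv.ofEq _ _ heq.symm))
end

section
variable {R : Type} [Ring R]

lemma fgres_fst {n : ℕ} {A B : Type} [AddCommGroup A] [AddCommGroup B]
    [Module R A] [Module R B] (h : fgres R n (A × B)) : fgres R n A := by
  induction n generalizing A B with
  | zero =>
    haveI : Module.Finite R (A × B) := h
    exact Module.Finite.of_surjective (fst R A B) Prod.fst_surjective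
  | succ n ih =>
    obtain ⟨k, f, hf, hkf⟩ := h
    -- `A` and `B` are finitely generated
    haveI : Module.Finite R (A × B) := Module.Finite.of_surjective f hf
    haveI : Module.Finite R A := Module.Finite.of_surjective (fst R A B) Prod.fst_surjective
    haveI : Module.Finite R B := Module.Finite.of_surjective (snd R A B) Prod.snd_surjective
    obtain ⟨a, gA, hgA⟩ := Module.Finite.exists_fin' R A
    obtain ⟨b, gB, hgB⟩ := Module.Finite.exists_fin' R B
    set g := LinearMap.prodMap gA gB with hg
    have hgs : Surjective g := by
      intro x
      obtain ⟨p, hp⟩ := hgA x.1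
      obtain ⟨q, hq⟩ := hgB x.2
      exact ⟨(p, q), Prod.ext hp hq⟩
    -- Schanuel: ker f × ((Fin a → R) × (Fin b → R)) ≃ ker g × (Fin k → R)
    obtain ⟨e⟩ := schanuel (inferInstance : Module.Projective R (Fin k → R))
      (inferInstance : Module.Projective R ((Fin a → R) × (Fin b → R))) f g hf hgs
    have h1 : fgres R n (↥(ker f) × ((Fin a → R) × (Fin b → R))) :=
      fgres_prod hkf (fgres_prod fgres_free fgres_free)
    have h2 : fgres R n (↥(ker g) × (Fin k → R)) := fgres_congr h1 e
    have h3 : fgres R n ↥(ker g) := ih (A := ↥(ker g)) (B := (Fin k → R)) h2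
    have h4 : fgres R n (↥(ker gA) × ↥(ker gB)) := by
      refine fgres_congr h3 ?_
      have : ker g = (ker gA).prod (ker gB) := by rw [hg, ker_prodMap]
      exact (LinearEquiv.ofEq _ _ this).trans (prodSubEquiv _ _)
    exact ⟨a, gA, hgA, ih h4⟩

lemma fgres_prod_iff {n : ℕ} {A B : Type} [AddCommGroup A] [AddCommGroup B]
    [Module R A] [Module R B] :
    fgres R n (A × B) ↔ fgres R n A ∧ fgres R n B :=
  ⟨fun h => ⟨fgres_fst h, fgres_fst (fgres_congr h (LinearEquiv.prodComm R A B))⟩,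
   fun h => fgres_prod h.1 h.2⟩

end

section
variable {R : Type} [Ring R]

/-- Data of a projective resolution of `M` by explicit linear maps. -/
structure ChainData (R : Type) [Ring R] (M : Type) [AddCommGroup M] [Module R M] where
  P : ℕ → ModuleCat.{0} R
  proj : ∀ n, Projective (P n)
  d : ∀ n, ↥(P (n+1)) →ₗ[R] ↥(P n)
  pi : ↥(P 0) →ₗ[R] M
  surj : Surjective pi
  ex0 : range (d 0) = ker pi
  ex : ∀ n, range (d (n+1)) = ker (d n)

namespace ChainData

variable {M : Type} [AddCommGroup M] [Module R M] (D : ChainData R M)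

lemma sq (n : ℕ) : (D.d n).comp (D.d (n+1)) = 0 := by
  apply LinearMap.ext
  intro x
  have : D.d (n+1) x ∈ ker (D.d n) := by
    rw [← D.ex n]; exact ⟨x, rfl⟩
  simpa using this

/-- The chain complex associated to chain data. -/
noncomputable def complex : ChainComplex (ModuleCat R) ℕ :=
  ChainComplex.of D.P (fun n => (ModuleCat.ofHom (D.d n) : D.P (n+1) ⟶ D.P n)) (fun n => ModuleCat.hom_ext (D.sq n))

lemma complex_d (n : ℕ) : D.complex.d (n+1) n = (ModuleCat.ofHom (D.d n) : D.P (n+1) ⟶ D.P n) :=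
  ChainComplex.of_d D.P (fun n => (ModuleCat.ofHom (D.d n) : D.P (n+1) ⟶ D.P n)) n

lemma d_pi : D.pi.comp (D.d 0) = 0 := by
  apply LinearMap.ext
  intro x
  have : D.d 0 x ∈ ker D.pi := by rw [← D.ex0]; exact ⟨x, rfl⟩
  simpa using this

/-- The augmentation morphism. -/
noncomputable def pihom :
    D.complex ⟶ (ChainComplex.single₀ (ModuleCat R)).obj (ModuleCat.of R M) :=
  (ChainComplex.toSingle₀Equiv _ _).symm
    ⟨(ModuleCat.ofHom D.pi : D.complex.X 0 ⟶ ModuleCat.of R M), by rw [D.complex_d]; exact ModuleCat.hom_ext D.d_pi⟩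

lemma pihom_f_zero : D.pihom.f 0 = (ModuleCat.ofHom D.pi : D.complex.X 0 ⟶ ModuleCat.of R M) :=
  ChainComplex.toSingle₀Equiv_symm_apply_f_zero _ _

/-- The resolution associated to chain data. -/
noncomputable def res : ProjectiveResolution (ModuleCat.of R M) where
  complex := D.complex
  projective := D.proj
  π := D.pihom
  quasiIso := ⟨fun n => by
    cases n with
    | zero =>
      rw [ChainComplex.quasiIsoAt₀_iff, ShortComplex.quasiIso_iff_of_zeros']
      · constructor
        · rw [ShortComplex.moduleCat_exact_iff_range_eq_ker]
          show range (D.complex.d 1 0).hom = ker (D.pihom.f 0).hom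
          rw [D.pihom_f_zero, D.complex_d]
          exact D.ex0
        · show Epi (D.pihom.f 0)
          rw [D.pihom_f_zero]
          exact (ModuleCat.epi_iff_surjective _).2 D.surj
      · rfl
      · rfl
      · rfl
    | succ n =>
      rw [quasiIsoAt_iff_exactAt']
      · rw [HomologicalComplex.exactAt_iff' _ (n+2) (n+1) n (by simp) (by simp),
          ShortComplex.moduleCat_exact_iff_range_eq_ker]
        show range (D.complex.d (n+2) (n+1)).hom = ker (D.complex.d (n+1) n).hom
        rw [D.complex_d, D.complex_d]
        exact D.ex n
      · apply ChainComplex.exactAt_succ_single_obj⟩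

end ChainData
end

section
variable {R : Type} [Ring R]

namespace ChainData

variable {M : Type} [AddCommGroup M] [Module R M]

/-- Extract chain data from a projective resolution. -/
noncomputable def ofRes (res : ProjectiveResolution (ModuleCat.of R M)) : ChainData R M where
  P n := res.complex.X n
  proj := res.projective
  d n := (res.complex.d (n+1) n).hom
  pi := (res.π.f 0 : res.complex.X 0 ⟶ ModuleCat.of R M).hom
  surj := (ModuleCat.epi_iff_surjective (res.π.f 0)).1 inferInstance
  ex0 := res.exact₀.moduleCat_range_eq_ker
  ex n := (res.exact_succ n).moduleCat_range_eq_ker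

/-- The free cover of a module. -/
noncomputable def cover (X : ModuleCat R) : ModuleCat.of R (X →₀ R) ⟶ X :=
  ModuleCat.ofHom (Finsupp.linearCombination R _root_.id)

lemma cover_surj (X : ModuleCat R) : Surjective (cover X) :=
  Finsupp.linearCombination_id_surjective R X

/-- The iterated syzygies of a module. -/
noncomputable def syz (A : Type) [AddCommGroup A] [Module R A] : ℕ → ModuleCat R
  | 0 => ModuleCat.of R A
  | (n+1) => ModuleCat.of R ↥(ker (cover (syz A n)).hom)

/-- The canonical free resolution chain data of an arbitrary module. -/
noncomputable def free (A : Type) [AddCommGroup A] [Module R A] : ChainData R A where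
  P n := ModuleCat.of R ((syz A n : ModuleCat R) →₀ R)
  proj n := (IsProjective.iff_projective.{0,0} _).1 inferInstance
  d n := (ker (cover (syz A n)).hom).subtype.comp (cover (syz A (n+1))).hom
  pi := (cover (syz A 0)).hom
  surj := cover_surj _
  ex0 := by
    erw [range_comp, range_eq_top.2 (cover_surj _), Submodule.map_top, Submodule.range_subtype]
    rfl
  ex n := by
    erw [range_comp, range_eq_top.2 (cover_surj _), Submodule.map_top, Submodule.range_subtype,
      ker_comp, Submodule.ker_subtype]
    rfl

/-- Splicing a finite free cover with chain data for the kernel. -/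
noncomputable def splice {k : ℕ} (f : (Fin k → R) →ₗ[R] M) (hf : Surjective f)
    (D' : ChainData R ↥(ker f)) : ChainData R M where
  P n := match n with
    | 0 => ModuleCat.of R (Fin k → R)
    | (n+1) => D'.P n
  proj n := match n with
    | 0 => (IsProjective.iff_projective.{0,0} _).1 inferInstance
    | (n+1) => D'.proj n
  d n := match n with
    | 0 => (ker f).subtype.comp D'.pi
    | (n+1) => D'.d n
  pi := f
  surj := hf
  ex0 := by
    rw [range_comp, range_eq_top.2 D'.surj, Submodule.map_top, Submodule.range_subtype]
  ex n := match n with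
    | 0 => by
      show range (D'.d 0) = ker ((ker f).subtype.comp D'.pi)
      rw [ker_comp, Submodule.ker_subtype]
      exact D'.ex0
    | (n+1) => D'.ex n

/-- Shifting chain data: chain data for the first syzygy. -/
noncomputable def shift (D : ChainData R M) : ChainData R ↥(ker D.pi) where
  P n := D.P (n+1)
  proj n := D.proj (n+1)
  d n := D.d (n+1)
  pi := codRestrict (ker D.pi) (D.d 0) (fun x => by rw [← D.ex0]; exact ⟨x, rfl⟩)
  surj := by
    intro y
    have : (y : ↥(D.P 0)) ∈ range (D.d 0) := by rw [D.ex0]; exact y.2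
    obtain ⟨x, hx⟩ := this
    exact ⟨x, Subtype.ext hx⟩
  ex0 := by
    rw [ker_codRestrict]
    exact D.ex 0
  ex n := D.ex (n+1)

end ChainData
end

section
variable {R : Type} [Ring R]

lemma fgres_of_chainData {n : ℕ} {M : Type} [AddCommGroup M] [Module R M]
    (D : ChainData R M) (hfin : ∀ i ≤ n, Module.Finite R ↥(D.P i)) :
    fgres R n M := by
  induction n generalizing M with
  | zero =>
    haveI := hfin 0 le_rfl
    exact Module.Finite.of_surjective D.pi D.surj
  | succ n ih =>
    haveI := hfin 0 (Nat.zero_le _)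
    haveI : Module.Finite R M := Module.Finite.of_surjective D.pi D.surj
    obtain ⟨k, g, hg⟩ := Module.Finite.exists_fin' R M
    have hP0 : Module.Projective R ↥(D.P 0) :=
      (IsProjective.iff_projective.{0,0} (P := ↥(D.P 0))).2 (D.proj 0)
    obtain ⟨e⟩ := schanuel (inferInstance : Module.Projective R (Fin k → R)) hP0
      g D.pi hg D.surj
    have hker : fgres R n ↥(ker D.pi) :=
      ih D.shift (fun i hi => hfin (i+1) (Nat.succ_le_succ hi))
    have h1 : fgres R n (↥(ker D.pi) × (Fin k → R)) := fgres_prod hker fgres_free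
    have h2 : fgres R n (↥(ker g) × ↥(D.P 0)) := fgres_congr h1 e.symm
    exact ⟨k, g, hg, fgres_fst h2⟩

lemma exists_chainData_of_fgres {n : ℕ} {M : Type} [AddCommGroup M] [Module R M]
    (h : fgres R n M) :
    ∃ D : ChainData R M, ∀ i ≤ n, Module.Finite R ↥(D.P i) := by
  induction n generalizing M with
  | zero =>
    haveI : Module.Finite R M := h
    obtain ⟨k, f, hf⟩ := Module.Finite.exists_fin' R M
    refine ⟨ChainData.splice f hf (ChainData.free _), ?_⟩
    intro i hi
    interval_cases i
    show Module.Finite R (Fin k → R)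
    infer_instance
  | succ n ih =>
    obtain ⟨k, f, hf, hker⟩ := h
    obtain ⟨D', hD'⟩ := ih hker
    refine ⟨ChainData.splice f hf D', ?_⟩
    intro i hi
    match i with
    | 0 => show Module.Finite R (Fin k → R); infer_instance
    | (i+1) => exact hD' i (Nat.le_of_succ_le_succ hi)

end


section
variable {R : Type} [Ring R]

lemma isTypeFP_iff_fgres {n : ℕ} {M : Type} [AddCommGroup M] [Module R M] :
    IsTypeFP R (ModuleCat.of R M) n ↔ fgres R n M := by
  constructor
  · rintro ⟨res, hfin⟩
    exact fgres_of_chainData (ChainData.ofRes res) (fun i hi => hfin i hi)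
  · intro h
    obtain ⟨D, hfin⟩ := exists_chainData_of_fgres h
    exact ⟨D.res, fun i hi => hfin i hi⟩

end

/-- `M ⊕ N` is of type `FP_n` iff both `M` and `N` are of type `FP_n`. -/
theorem stmt4 (R : Type) [Ring R] (n : ℕ)
    (M N : Type) [AddCommGroup M] [AddCommGroup N] [Module R M] [Module R N] :
    IsTypeFP R (ModuleCat.of R (M × N)) n ↔
      IsTypeFP R (ModuleCat.of R M) n ∧ IsTypeFP R (ModuleCat.of R N) n := by
  simp only [isTypeFP_iff_fgres]
  exact fgres_prod_iff
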